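/- arXiv:2402.00618 — 2 statements merged into one kernel-verified Lean document; each statement's English description precedes it below -/
import Mathlib

section
/- The positive ideal property of positive (p₁,…,p_m;r)-dominated operators: let 1 ≤ r, p, p₁,…,p_m ≤ ∞ with 1/p = 1/p₁ + ⋯ + 1/p_m + 1/r. If T ∈ 𝓓⁺_{(p₁,…,p_m;r)}(E₁,…,E_m;F), u_j : G_j → E_j are positive bounded linear operators (1 ≤ j ≤ m), and v : F → G is a positive bounded linear operator, then v ∘ T ∘ (u₁,…,u_m) ∈ 𝓓⁺_{(p₁,…,p_m;r)}(G₁,…,G_m;G) and d⁺_{(p₁,…,p_m;r)}(v ∘ T ∘ (u₁,…,u_m)) ≤ ‖v‖ d⁺_{(p₁,…,p_m;r)}(T) ∏_j ‖u_j‖. -/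
/-- The weak `ℓ_p` norm of a finite positive family, over the positive dual unit ball. -/
noncomputable def wnormPos {E : Type*} [NormedAddCommGroup E] [Lattice E] [HasSolidNorm E]
    [IsOrderedAddMonoid E] [NormedSpace ℝ E]
    (p : ℝ) {n : ℕ} (x : Fin n → E) : ℝ :=
  sSup {s : ℝ | ∃ φ : E →L[ℝ] ℝ, ‖φ‖ ≤ 1 ∧ (∀ y, 0 ≤ y → 0 ≤ φ y) ∧
    s = (∑ i, (φ (x i)) ^ p) ^ (1 / p)}

/-- The weak `ℓ_r` norm of a finite positive family of functionals on `F`, over the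
positive bidual unit ball. -/
noncomputable def wnormDualPos {F : Type*} [NormedAddCommGroup F] [Lattice F] [HasSolidNorm F]
    [IsOrderedAddMonoid F] [NormedSpace ℝ F]
    (r : ℝ) {n : ℕ} (y : Fin n → (F →L[ℝ] ℝ)) : ℝ :=
  sSup {s : ℝ | ∃ ψ : (F →L[ℝ] ℝ) →L[ℝ] ℝ, ‖ψ‖ ≤ 1 ∧
    (∀ φ : F →L[ℝ] ℝ, (∀ z, 0 ≤ z → 0 ≤ φ z) → 0 ≤ ψ φ) ∧
    s = (∑ i, (ψ (y i)) ^ r) ^ (1 / r)}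

/-- `T` is positive `(p₁,…,p_m;r)`-dominated with constant `C`. -/
def IsPosDominated {m : ℕ} {E : Fin m → Type*}
    [∀ j, NormedAddCommGroup (E j)] [∀ j, Lattice (E j)]
    [∀ j, HasSolidNorm (E j)] [∀ j, IsOrderedAddMonoid (E j)] [∀ j, NormedSpace ℝ (E j)]
    {F : Type*} [NormedAddCommGroup F] [Lattice F] [HasSolidNorm F]
    [IsOrderedAddMonoid F] [NormedSpace ℝ F]
    (p : ℝ) (pj : Fin m → ℝ) (r : ℝ)
    (T : ContinuousMultilinearMap ℝ E F) (C : ℝ) : Prop :=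
  ∀ (n : ℕ) (x : Fin n → ∀ j, E j) (y : Fin n → (F →L[ℝ] ℝ)),
    (∀ i j, 0 ≤ x i j) → (∀ i, ∀ z, 0 ≤ z → 0 ≤ y i z) →
    (∑ i, |y i (T (x i))| ^ p) ^ (1 / p) ≤
      C * (∏ j, wnormPos (pj j) (fun i => x i j)) * wnormDualPos r y

/-- `d⁺_{(p₁,…,p_m;r)}(T)`. -/
noncomputable def posDominatedNorm {m : ℕ} {E : Fin m → Type*}
    [∀ j, NormedAddCommGroup (E j)] [∀ j, Lattice (E j)]
    [∀ j, HasSolidNorm (E j)] [∀ j, IsOrderedAddMonoid (E j)] [∀ j, NormedSpace ℝ (E j)]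
    {F : Type*} [NormedAddCommGroup F] [Lattice F] [HasSolidNorm F]
    [IsOrderedAddMonoid F] [NormedSpace ℝ F]
    (p : ℝ) (pj : Fin m → ℝ) (r : ℝ) (T : ContinuousMultilinearMap ℝ E F) : ℝ :=
  sInf {C : ℝ | 0 < C ∧ IsPosDominated p pj r T C}


section AuxHelpers

variable {n : ℕ}

private lemma lp_scale' {p : ℝ} (hp : p ≠ 0) {c : ℝ} (hc : 0 ≤ c)
    {f : Fin n → ℝ} (hf : ∀ i, 0 ≤ f i) :
    (∑ i, (c * f i) ^ p) ^ (1 / p) = c * (∑ i, f i ^ p) ^ (1 / p) := by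
  have h1 : ∀ i ∈ Finset.univ, (c * f i) ^ p = c ^ p * f i ^ p :=
    fun i _ => Real.mul_rpow hc (hf i)
  rw [Finset.sum_congr rfl h1, ← Finset.mul_sum,
    Real.mul_rpow (Real.rpow_nonneg hc p)
      (Finset.sum_nonneg fun i _ => Real.rpow_nonneg (hf i) p),
    ← Real.rpow_mul hc, mul_one_div_cancel hp, Real.rpow_one]

private lemma lp_mono' {p : ℝ} (hp : 0 ≤ p) {f g : Fin n → ℝ} (hf : ∀ i, 0 ≤ f i)
    (hfg : ∀ i, f i ≤ g i) :
    (∑ i, f i ^ p) ^ (1 / p) ≤ (∑ i, g i ^ p) ^ (1 / p) := by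
  apply Real.rpow_le_rpow (Finset.sum_nonneg fun i _ => Real.rpow_nonneg (hf i) p)
    (Finset.sum_le_sum fun i _ => Real.rpow_le_rpow (hf i) (hfg i) hp)
    (by positivity)

end AuxHelpers

section WAux

variable {E G : Type*} [NormedAddCommGroup E] [Lattice E] [HasSolidNorm E]
    [IsOrderedAddMonoid E] [NormedSpace ℝ E]
  [NormedAddCommGroup G] [Lattice G] [HasSolidNorm G]
    [IsOrderedAddMonoid G] [NormedSpace ℝ G] {p : ℝ} {n : ℕ}

private lemma wnormPos_nonneg' (hp : 1 ≤ p) {x : Fin n → E} (hx : ∀ i, 0 ≤ x i) :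
    0 ≤ wnormPos p x := by
  apply Real.sSup_nonneg
  rintro s ⟨φ, h1, h2, rfl⟩
  exact Real.rpow_nonneg (Finset.sum_nonneg fun i _ =>
    Real.rpow_nonneg (h2 _ (hx i)) p) _

private lemma wnormPos_bddAbove' (hp : 1 ≤ p) {x : Fin n → E} (hx : ∀ i, 0 ≤ x i) :
    BddAbove {s : ℝ | ∃ φ : E →L[ℝ] ℝ, ‖φ‖ ≤ 1 ∧ (∀ y, 0 ≤ y → 0 ≤ φ y) ∧
      s = (∑ i, (φ (x i)) ^ p) ^ (1 / p)} := by
  refine ⟨(∑ i, ‖x i‖ ^ p) ^ (1 / p), ?_⟩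
  rintro s ⟨φ, h1, h2, rfl⟩
  refine lp_mono' (by linarith) (fun i => h2 _ (hx i)) (fun i => ?_)
  calc φ (x i) ≤ ‖φ (x i)‖ := le_abs_self _
    _ ≤ ‖φ‖ * ‖x i‖ := φ.le_opNorm _
    _ ≤ 1 * ‖x i‖ := by gcongr
    _ = ‖x i‖ := one_mul _

private lemma wnormPos_comp_le' (hp : 1 ≤ p) (u : G →L[ℝ] E)
    (hu : ∀ z, 0 ≤ z → 0 ≤ u z) {x : Fin n → G} (hx : ∀ i, 0 ≤ x i) :
    wnormPos p (fun i => u (x i)) ≤ ‖u‖ * wnormPos p x := by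
  have hp0 : p ≠ 0 := by positivity
  apply Real.sSup_le
  · rintro s ⟨φ, h1, h2, rfl⟩
    by_cases hu0 : ‖u‖ = 0
    · have : u = 0 := by simpa [norm_eq_zero] using hu0
      subst this
      simp only [ContinuousLinearMap.zero_apply, map_zero,
        Real.zero_rpow hp0, Finset.sum_const_zero,
        Real.zero_rpow (one_div_ne_zero hp0)]
      exact mul_nonneg (norm_nonneg _) (wnormPos_nonneg' hp hx)
    · have hupos : 0 < ‖u‖ := lt_of_le_of_ne (norm_nonneg u) (Ne.symm hu0)
      set φ' : G →L[ℝ] ℝ := ‖u‖⁻¹ • (φ.comp u) with hφ'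
      have hφ'app : ∀ z, φ' z = ‖u‖⁻¹ * φ (u z) := fun z => rfl
      have hφ'norm : ‖φ'‖ ≤ 1 := by
        have h3 : ‖φ'‖ ≤ ‖u‖⁻¹ * ‖φ.comp u‖ := by
          rw [hφ']
          calc ‖‖u‖⁻¹ • φ.comp u‖ ≤ ‖(‖u‖⁻¹ : ℝ)‖ * ‖φ.comp u‖ :=
                ContinuousLinearMap.opNorm_smul_le _ _
            _ ≤ ‖u‖⁻¹ * ‖φ.comp u‖ := by
                rw [Real.norm_eq_abs, abs_of_nonneg (by positivity)]
        calc ‖φ'‖ ≤ ‖u‖⁻¹ * ‖φ.comp u‖ := h3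
          _ ≤ ‖u‖⁻¹ * (‖φ‖ * ‖u‖) :=
              mul_le_mul_of_nonneg_left (φ.opNorm_comp_le u) (by positivity)
          _ ≤ ‖u‖⁻¹ * (1 * ‖u‖) := by gcongr
          _ = 1 := by field_simp
      have hφ'pos : ∀ z, 0 ≤ z → 0 ≤ φ' z := fun z hz => by
        rw [hφ'app]
        exact mul_nonneg (by positivity) (h2 _ (hu z hz))
      have hkey : (∑ i, (φ (u (x i))) ^ p) ^ (1 / p) =
          ‖u‖ * (∑ i, (φ' (x i)) ^ p) ^ (1 / p) := by
        simp only [hφ'app]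
        rw [lp_scale' hp0 (by positivity : (0:ℝ) ≤ ‖u‖⁻¹)
          (fun i => h2 _ (hu _ (hx i)))]
        field_simp
      rw [hkey]
      exact mul_le_mul_of_nonneg_left
        (le_csSup (wnormPos_bddAbove' hp hx) ⟨φ', hφ'norm, hφ'pos, rfl⟩)
        (norm_nonneg u)
  · exact mul_nonneg (norm_nonneg u) (wnormPos_nonneg' hp hx)

end WAux

section DualAux

variable {F G : Type*} [NormedAddCommGroup F] [Lattice F] [HasSolidNorm F]
    [IsOrderedAddMonoid F] [NormedSpace ℝ F]
  [NormedAddCommGroup G] [Lattice G] [HasSolidNorm G]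
    [IsOrderedAddMonoid G] [NormedSpace ℝ G] {r : ℝ} {n : ℕ}

private lemma wnormDualPos_nonneg' (hr : 1 ≤ r) {y : Fin n → (F →L[ℝ] ℝ)}
    (hy : ∀ i, ∀ z, 0 ≤ z → 0 ≤ y i z) : 0 ≤ wnormDualPos r y := by
  apply Real.sSup_nonneg
  rintro s ⟨ψ, h1, h2, rfl⟩
  exact Real.rpow_nonneg (Finset.sum_nonneg fun i _ =>
    Real.rpow_nonneg (h2 _ (hy i)) r) _

private lemma wnormDualPos_bddAbove' (hr : 1 ≤ r) {y : Fin n → (F →L[ℝ] ℝ)}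
    (hy : ∀ i, ∀ z, 0 ≤ z → 0 ≤ y i z) :
    BddAbove {s : ℝ | ∃ ψ : (F →L[ℝ] ℝ) →L[ℝ] ℝ, ‖ψ‖ ≤ 1 ∧
      (∀ φ : F →L[ℝ] ℝ, (∀ z, 0 ≤ z → 0 ≤ φ z) → 0 ≤ ψ φ) ∧
      s = (∑ i, (ψ (y i)) ^ r) ^ (1 / r)} := by
  refine ⟨(∑ i, ‖y i‖ ^ r) ^ (1 / r), ?_⟩
  rintro s ⟨ψ, h1, h2, rfl⟩
  refine lp_mono' (by linarith) (fun i => h2 _ (hy i)) (fun i => ?_)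
  calc ψ (y i) ≤ ‖ψ (y i)‖ := le_abs_self _
    _ ≤ ‖ψ‖ * ‖y i‖ := ψ.le_opNorm _
    _ ≤ 1 * ‖y i‖ := by gcongr
    _ = ‖y i‖ := one_mul _

private lemma wnormDualPos_comp_le' (hr : 1 ≤ r) (v : F →L[ℝ] G)
    (hv : ∀ z, 0 ≤ z → 0 ≤ v z) {y : Fin n → (G →L[ℝ] ℝ)}
    (hy : ∀ i, ∀ z, 0 ≤ z → 0 ≤ y i z) :
    wnormDualPos r (fun i => (y i).comp v) ≤ ‖v‖ * wnormDualPos r y := by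
  have hr0 : r ≠ 0 := by positivity
  set Λ : (G →L[ℝ] ℝ) →L[ℝ] (F →L[ℝ] ℝ) :=
    (ContinuousLinearMap.compL ℝ F G ℝ).flip v with hΛ
  have hΛapp : ∀ φ : G →L[ℝ] ℝ, Λ φ = φ.comp v := fun φ => rfl
  have hΛnorm : ‖Λ‖ ≤ ‖v‖ := by
    apply ContinuousLinearMap.opNorm_le_bound _ (norm_nonneg v)
    intro φ
    rw [hΛapp, mul_comm]
    exact φ.opNorm_comp_le v
  apply Real.sSup_le
  · rintro s ⟨ψ, h1, h2, rfl⟩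
    by_cases hv0 : ‖v‖ = 0
    · have : v = 0 := by simpa [norm_eq_zero] using hv0
      subst this
      simp only [ContinuousLinearMap.comp_zero, map_zero,
        Real.zero_rpow hr0, Finset.sum_const_zero,
        Real.zero_rpow (one_div_ne_zero hr0)]
      exact mul_nonneg (norm_nonneg _) (wnormDualPos_nonneg' hr hy)
    · have hvpos : 0 < ‖v‖ := lt_of_le_of_ne (norm_nonneg _) (Ne.symm hv0)
      set ψ' : (G →L[ℝ] ℝ) →L[ℝ] ℝ := ‖v‖⁻¹ • (ψ.comp Λ) with hψ'
      have hψ'app : ∀ φ : G →L[ℝ] ℝ, ψ' φ = ‖v‖⁻¹ * ψ (φ.comp v) := fun φ => rfl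
      have hψ'norm : ‖ψ'‖ ≤ 1 := by
        have h3 : ‖ψ'‖ ≤ ‖v‖⁻¹ * ‖ψ.comp Λ‖ := by
          rw [hψ']
          calc ‖‖v‖⁻¹ • ψ.comp Λ‖ ≤ ‖(‖v‖⁻¹ : ℝ)‖ * ‖ψ.comp Λ‖ :=
                ContinuousLinearMap.opNorm_smul_le _ _
            _ ≤ ‖v‖⁻¹ * ‖ψ.comp Λ‖ := by
                rw [Real.norm_eq_abs, abs_of_nonneg (by positivity)]
        calc ‖ψ'‖ ≤ ‖v‖⁻¹ * ‖ψ.comp Λ‖ := h3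
          _ ≤ ‖v‖⁻¹ * (‖ψ‖ * ‖Λ‖) :=
              mul_le_mul_of_nonneg_left (ψ.opNorm_comp_le Λ) (by positivity)
          _ ≤ ‖v‖⁻¹ * (1 * ‖v‖) := by gcongr
          _ = 1 := by field_simp
      have hψ'pos : ∀ φ : G →L[ℝ] ℝ, (∀ z, 0 ≤ z → 0 ≤ φ z) → 0 ≤ ψ' φ := by
        intro φ hφ
        rw [hψ'app]
        exact mul_nonneg (by positivity) (h2 _ (fun z hz => hφ _ (hv z hz)))
      have hkey : (∑ i, (ψ ((y i).comp v)) ^ r) ^ (1 / r) =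
          ‖v‖ * (∑ i, (ψ' (y i)) ^ r) ^ (1 / r) := by
        simp only [hψ'app]
        rw [lp_scale' hr0 (by positivity : (0:ℝ) ≤ ‖v‖⁻¹)
          (fun i => h2 _ (fun z hz => hy i _ (hv z hz)))]
        field_simp
      rw [hkey]
      exact mul_le_mul_of_nonneg_left
        (le_csSup (wnormDualPos_bddAbove' hr hy) ⟨ψ', hψ'norm, hψ'pos, rfl⟩)
        (norm_nonneg v)
  · exact mul_nonneg (norm_nonneg v) (wnormDualPos_nonneg' hr hy)

end DualAux

section MainAux

variable {m : ℕ} {E G' : Fin m → Type*}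
    [∀ j, NormedAddCommGroup (E j)] [∀ j, Lattice (E j)]
    [∀ j, HasSolidNorm (E j)] [∀ j, IsOrderedAddMonoid (E j)] [∀ j, NormedSpace ℝ (E j)]
    [∀ j, NormedAddCommGroup (G' j)] [∀ j, Lattice (G' j)]
    [∀ j, HasSolidNorm (G' j)] [∀ j, IsOrderedAddMonoid (G' j)] [∀ j, NormedSpace ℝ (G' j)]
    {F G : Type*} [NormedAddCommGroup F] [Lattice F] [HasSolidNorm F]
    [IsOrderedAddMonoid F] [NormedSpace ℝ F]
    [NormedAddCommGroup G] [Lattice G] [HasSolidNorm G]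
    [IsOrderedAddMonoid G] [NormedSpace ℝ G]

private lemma isPosDominated_comp' {p r : ℝ} {pj : Fin m → ℝ}
    (hr : 1 ≤ r) (hpj : ∀ j, 1 ≤ pj j)
    (T : ContinuousMultilinearMap ℝ E F) {C : ℝ} (hC0 : 0 ≤ C)
    (hC : IsPosDominated p pj r T C)
    (u : ∀ j, G' j →L[ℝ] E j) (hu : ∀ j, ∀ x, 0 ≤ x → 0 ≤ u j x)
    (v : F →L[ℝ] G) (hv : ∀ y, 0 ≤ y → 0 ≤ v y) :
    IsPosDominated p pj r
      (v.compContinuousMultilinearMap (T.compContinuousLinearMap u))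
      (‖v‖ * C * ∏ j, ‖u j‖) := by
  intro n x y hx hy
  have hx' : ∀ i j, (0:E j) ≤ u j (x i j) := fun i j => hu j _ (hx i j)
  have hy' : ∀ i, ∀ z : F, 0 ≤ z → 0 ≤ ((y i).comp v) z :=
    fun i z hz => hy i _ (hv z hz)
  have key := hC n (fun i j => u j (x i j)) (fun i => (y i).comp v) hx' hy'
  have happ : ∀ i, (y i) ((v.compContinuousMultilinearMap
      (T.compContinuousLinearMap u)) (x i)) =
      ((y i).comp v) (T (fun j => u j (x i j))) := fun i => rfl
  calc (∑ i, |y i ((v.compContinuousMultilinearMap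
          (T.compContinuousLinearMap u)) (x i))| ^ p) ^ (1 / p)
      = (∑ i, |((y i).comp v) (T (fun j => u j (x i j)))| ^ p) ^ (1 / p) := by
        simp only [happ]
    _ ≤ C * (∏ j, wnormPos (pj j) (fun i => u j (x i j))) *
          wnormDualPos r (fun i => (y i).comp v) := key
    _ ≤ C * (∏ j, ‖u j‖ * wnormPos (pj j) (fun i => x i j)) *
          (‖v‖ * wnormDualPos r y) := by
        apply mul_le_mul
        · apply mul_le_mul_of_nonneg_left _ hC0
          exact Finset.prod_le_prod
            (fun j _ => wnormPos_nonneg' (hpj j) (fun i => hx' i j))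
            (fun j _ => wnormPos_comp_le' (hpj j) (u j) (hu j) (fun i => hx i j))
        · exact wnormDualPos_comp_le' hr v hv hy
        · exact wnormDualPos_nonneg' hr hy'
        · exact mul_nonneg hC0 (Finset.prod_nonneg fun j _ =>
            mul_nonneg (norm_nonneg _) (wnormPos_nonneg' (hpj j) fun i => hx i j))
    _ = ‖v‖ * C * (∏ j, ‖u j‖) *
          (∏ j, wnormPos (pj j) (fun i => x i j)) * wnormDualPos r y := by
        rw [Finset.prod_mul_distrib]; ring

end MainAux

/-- Positive ideal property of positive `(p₁,…,p_m;r)`-dominated multilinear operators. -/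
theorem posDominated_ideal_property
    {m : ℕ} {E G' : Fin m → Type*}
    [∀ j, NormedAddCommGroup (E j)] [∀ j, Lattice (E j)]
    [∀ j, HasSolidNorm (E j)] [∀ j, IsOrderedAddMonoid (E j)] [∀ j, NormedSpace ℝ (E j)]
    [∀ j, NormedAddCommGroup (G' j)] [∀ j, Lattice (G' j)]
    [∀ j, HasSolidNorm (G' j)] [∀ j, IsOrderedAddMonoid (G' j)] [∀ j, NormedSpace ℝ (G' j)]
    {F G : Type*} [NormedAddCommGroup F] [Lattice F] [HasSolidNorm F]
    [IsOrderedAddMonoid F] [NormedSpace ℝ F]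
    [NormedAddCommGroup G] [Lattice G] [HasSolidNorm G]
    [IsOrderedAddMonoid G] [NormedSpace ℝ G]
    (p r : ℝ) (pj : Fin m → ℝ) (hr : 1 ≤ r) (hpj : ∀ j, 1 ≤ pj j) (hp : 1 ≤ p)
    (hhol : 1 / p = (∑ j, 1 / pj j) + 1 / r)
    (T : ContinuousMultilinearMap ℝ E F)
    (hT : ∃ C, 0 < C ∧ IsPosDominated p pj r T C)
    (u : ∀ j, G' j →L[ℝ] E j) (hu : ∀ j, ∀ x, 0 ≤ x → 0 ≤ u j x)
    (v : F →L[ℝ] G) (hv : ∀ y, 0 ≤ y → 0 ≤ v y) :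
    (∃ C, 0 < C ∧ IsPosDominated p pj r
        (v.compContinuousMultilinearMap (T.compContinuousLinearMap u)) C) ∧
    posDominatedNorm p pj r
        (v.compContinuousMultilinearMap (T.compContinuousLinearMap u)) ≤
      ‖v‖ * posDominatedNorm p pj r T * ∏ j, ‖u j‖ := by
  obtain ⟨C, hCpos, hC⟩ := hT
  have hwnonneg : ∀ (D : ℝ), 0 ≤ D →
      IsPosDominated p pj r
        (v.compContinuousMultilinearMap (T.compContinuousLinearMap u)) D →
      ∀ D' : ℝ, D ≤ D' →
      IsPosDominated p pj r
        (v.compContinuousMultilinearMap (T.compContinuousLinearMap u)) D' := by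
    intro D hD0 hD D' hDD' n x y hx hy
    refine (hD n x y hx hy).trans ?_
    have h1 : (0:ℝ) ≤ (∏ j, wnormPos (pj j) (fun i => x i j)) *
        wnormDualPos r y :=
      mul_nonneg (Finset.prod_nonneg fun j _ =>
          wnormPos_nonneg' (hpj j) fun i => hx i j)
        (wnormDualPos_nonneg' hr hy)
    calc D * (∏ j, wnormPos (pj j) (fun i => x i j)) * wnormDualPos r y
        = D * ((∏ j, wnormPos (pj j) (fun i => x i j)) * wnormDualPos r y) := by
          ring
      _ ≤ D' * ((∏ j, wnormPos (pj j) (fun i => x i j)) * wnormDualPos r y) :=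
          mul_le_mul_of_nonneg_right hDD' h1
      _ = D' * (∏ j, wnormPos (pj j) (fun i => x i j)) * wnormDualPos r y := by
          ring
  have hcomp : ∀ C' : ℝ, 0 < C' → IsPosDominated p pj r T C' →
      IsPosDominated p pj r
        (v.compContinuousMultilinearMap (T.compContinuousLinearMap u))
        (‖v‖ * C' * ∏ j, ‖u j‖) :=
    fun C' hC'pos hC' => isPosDominated_comp' hr hpj T hC'pos.le hC' u hu v hv
  have hk0 : (0:ℝ) ≤ ‖v‖ * C * ∏ j, ‖u j‖ :=
    mul_nonneg (mul_nonneg (norm_nonneg _) hCpos.le)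
      (Finset.prod_nonneg fun j _ => norm_nonneg _)
  constructor
  · exact ⟨‖v‖ * C * (∏ j, ‖u j‖) + 1, by positivity,
      hwnonneg _ hk0 (hcomp C hCpos hC) _ (by linarith)⟩
  · -- norm inequality
    set S' : Set ℝ := {D | 0 < D ∧ IsPosDominated p pj r
        (v.compContinuousMultilinearMap (T.compContinuousLinearMap u)) D}
      with hS'
    set TS : Set ℝ := {D | 0 < D ∧ IsPosDominated p pj r T D} with hTS
    have hTSne : TS.Nonempty := ⟨C, hCpos, hC⟩
    have hS'bdd : BddBelow S' := ⟨0, fun D hD => hD.1.le⟩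
    have hTSbdd : BddBelow TS := ⟨0, fun D hD => hD.1.le⟩
    set k : ℝ := ‖v‖ * ∏ j, ‖u j‖ with hk
    have hknn : 0 ≤ k := mul_nonneg (norm_nonneg _)
      (Finset.prod_nonneg fun j _ => norm_nonneg _)
    have hmain : ∀ C' ∈ TS, sInf S' ≤ k * C' := by
      intro C' hC'
      have hdom : IsPosDominated p pj r
          (v.compContinuousMultilinearMap (T.compContinuousLinearMap u))
          (k * C') := by
        have := hcomp C' hC'.1 hC'.2
        have heq : ‖v‖ * C' * ∏ j, ‖u j‖ = k * C' := by rw [hk]; ring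
        rwa [heq] at this
      have hkC'nn : 0 ≤ k * C' := mul_nonneg hknn hC'.1.le
      have : ∀ ε : ℝ, 0 < ε → sInf S' ≤ k * C' + ε := by
        intro ε hε
        apply csInf_le hS'bdd
        exact ⟨by linarith, hwnonneg _ hkC'nn hdom _ (by linarith)⟩
      exact le_of_forall_pos_le_add this
    have hgoal : sInf S' ≤ k * sInf TS := by
      rcases eq_or_lt_of_le hknn with hk0' | hkpos
      · calc sInf S' ≤ k * C := hmain C ⟨hCpos, hC⟩
          _ = 0 := by rw [← hk0']; ring
          _ = k * sInf TS := by rw [← hk0']; ring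
      · have : sInf S' / k ≤ sInf TS := by
          apply le_csInf hTSne
          intro C' hC'
          rw [div_le_iff₀ hkpos, mul_comm]
          exact hmain C' hC'
        calc sInf S' = k * (sInf S' / k) := by field_simp
          _ ≤ k * sInf TS := mul_le_mul_of_nonneg_left this hknn
    have heq2 : ‖v‖ * posDominatedNorm p pj r T * ∏ j, ‖u j‖ = k * sInf TS := by
      rw [hk, posDominatedNorm, ← hTS]; ring
    rw [posDominatedNorm, ← hS', heq2]
    exact hgoal
end

section
/- Equivalent formulation for positive (p₁,…,p_m)-dominated operators: let 1 ≤ p, p₁,…,p_m < ∞ with 1/p = 1/p₁ + ⋯ + 1/p_m, E_j Banach lattices, Y a Banach space, T ∈ L(E₁,…,E_m;Y). Then T satisfies (Σ_i ‖T(x_i¹,…,x_i^m)‖^p)^{1/p} ≤ C ∏_j ‖(x_i^j)‖_{p_j,w} for all positive finite families x_i^j ∈ E_j⁺ if and only if it satisfies (Σ_i ‖T(x_i¹,…,x_i^m)‖^p)^{1/p} ≤ C' ∏_j ‖(x_i^j)‖_{p_j,|w|} for arbitrary finite families x_i^j ∈ E_j, with C' ≤ 2^m C. -/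
/-- The weak `ℓ_p` norm of a finite family in a Banach space, over the dual unit ball. -/
noncomputable def wnorm {E : Type*} [NormedAddCommGroup E] [NormedSpace ℝ E]
    (p : ℝ) {n : ℕ} (x : Fin n → E) : ℝ :=
  sSup {s : ℝ | ∃ φ : E →L[ℝ] ℝ, ‖φ‖ ≤ 1 ∧ s = (∑ i, |φ (x i)| ^ p) ^ (1 / p)}

section Modulus

variable {F : Type*} [NormedAddCommGroup F] [Lattice F] [IsOrderedAddMonoid F] [HasSolidNorm F] [NormedSpace ℝ F]

/-- The "solid hull" sup functional attached to `φ`, on the positive cone. -/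
noncomputable def qfun (φ : F →L[ℝ] ℝ) (z : F) : ℝ :=
  sSup ((fun u => φ u) '' {u : F | |u| ≤ z})

lemma qfun_set_nonempty (φ : F →L[ℝ] ℝ) {z : F} (hz : 0 ≤ z) :
    ((fun u => φ u) '' {u : F | |u| ≤ z}).Nonempty :=
  ⟨φ 0, 0, by simpa using hz, rfl⟩

lemma qfun_set_le (φ : F →L[ℝ] ℝ) (z : F) :
    ∀ s ∈ (fun u => φ u) '' {u : F | |u| ≤ z}, s ≤ ‖φ‖ * ‖z‖ := by
  rintro s ⟨u, hu, rfl⟩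
  have habs : |u| ≤ |z| := le_trans hu (le_abs_self z)
  have hn : ‖u‖ ≤ ‖z‖ := HasSolidNorm.solid habs
  calc φ u ≤ |φ u| := le_abs_self _
    _ = ‖φ u‖ := (Real.norm_eq_abs _).symm
    _ ≤ ‖φ‖ * ‖u‖ := φ.le_opNorm u
    _ ≤ ‖φ‖ * ‖z‖ := mul_le_mul_of_nonneg_left hn (norm_nonneg φ)

lemma qfun_set_bddAbove (φ : F →L[ℝ] ℝ) (z : F) :
    BddAbove ((fun u => φ u) '' {u : F | |u| ≤ z}) :=
  ⟨‖φ‖ * ‖z‖, qfun_set_le φ z⟩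

lemma le_qfun (φ : F →L[ℝ] ℝ) {y z : F} (h : |y| ≤ z) : φ y ≤ qfun φ z :=
  le_csSup (qfun_set_bddAbove φ z) ⟨y, h, rfl⟩

lemma abs_le_qfun (φ : F →L[ℝ] ℝ) {y z : F} (h : |y| ≤ z) : |φ y| ≤ qfun φ z := by
  rcases abs_cases (φ y) with ⟨he, _⟩ | ⟨he, _⟩
  · rw [he]; exact le_qfun φ h
  · rw [he, ← map_neg]; exact le_qfun φ (by simpa using h)

lemma qfun_nonneg (φ : F →L[ℝ] ℝ) {z : F} (hz : 0 ≤ z) : 0 ≤ qfun φ z := by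
  simpa using abs_le_qfun φ (y := 0) (by simpa using hz)

lemma qfun_le (φ : F →L[ℝ] ℝ) {z : F} (hz : 0 ≤ z) : qfun φ z ≤ ‖φ‖ * ‖z‖ :=
  csSup_le (qfun_set_nonempty φ hz) (qfun_set_le φ z)

lemma qfun_zero (φ : F →L[ℝ] ℝ) : qfun φ 0 = 0 := by
  have hset : {u : F | |u| ≤ 0} = {0} := by
    ext u
    simp only [Set.mem_setOf_eq, Set.mem_singleton_iff]
    constructor
    · intro h
      have h1 : u ≤ 0 := (le_abs_self u).trans h
      have h2 : 0 ≤ u := neg_nonpos.mp ((neg_le_abs u).trans h)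
      exact le_antisymm h1 h2
    · rintro rfl; simp
  rw [qfun, hset, Set.image_singleton, map_zero, csSup_singleton]

lemma qfun_add (φ : F →L[ℝ] ℝ) {z₁ z₂ : F} (h₁ : 0 ≤ z₁) (h₂ : 0 ≤ z₂) :
    qfun φ (z₁ + z₂) = qfun φ z₁ + qfun φ z₂ := by
  apply le_antisymm
  · apply csSup_le (qfun_set_nonempty φ (add_nonneg h₁ h₂))
    rintro s ⟨u, hu, rfl⟩
    have hu' : |u| ≤ z₁ + z₂ := hu
    have hule : u ≤ z₁ + z₂ := (le_abs_self u).trans hu'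
    have hlue : -(z₁ + z₂) ≤ u := neg_le.mp ((neg_le_abs u).trans hu')
    set u₁ : F := (u ⊔ -z₁) ⊓ z₁ with hu₁def
    have hu1 : |u₁| ≤ z₁ := by
      rw [abs_le']
      refine ⟨inf_le_right, ?_⟩
      rw [neg_le]
      exact le_inf le_sup_right ((neg_nonpos_of_nonneg h₁).trans h₁)
    have hu2 : |u - u₁| ≤ z₂ := by
      rw [abs_le']
      constructor
      · rw [sub_le_comm]
        refine le_inf ((sub_le_self u h₂).trans le_sup_left) ?_
        rw [sub_le_iff_le_add]
        exact hule
      · rw [neg_sub, sub_le_iff_le_add]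
        refine inf_le_left.trans (sup_le (le_add_of_nonneg_left h₂) ?_)
        rw [← sub_le_iff_le_add']
        calc -z₁ - z₂ = -(z₁ + z₂) := by abel
          _ ≤ u := hlue
    have hsplit : φ u = φ u₁ + φ (u - u₁) := by
      rw [map_sub]; ring
    show φ u ≤ qfun φ z₁ + qfun φ z₂
    rw [hsplit]
    exact add_le_add (le_qfun φ hu1) (le_qfun φ hu2)
  · have key : ∀ u₁ : F, |u₁| ≤ z₁ → ∀ u₂ : F, |u₂| ≤ z₂ →
        φ u₁ + φ u₂ ≤ qfun φ (z₁ + z₂) := by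
      intro u₁ hx1 u₂ hx2
      have habs : |u₁ + u₂| ≤ z₁ + z₂ := (abs_add_le u₁ u₂).trans (add_le_add hx1 hx2)
      simpa [map_add] using le_qfun φ habs
    have h1 : qfun φ z₁ ≤ qfun φ (z₁ + z₂) - qfun φ z₂ := by
      apply csSup_le (qfun_set_nonempty φ h₁)
      rintro s ⟨u₁, hx1, rfl⟩
      have h2 : qfun φ z₂ ≤ qfun φ (z₁ + z₂) - φ u₁ := by
        apply csSup_le (qfun_set_nonempty φ h₂)
        rintro t ⟨u₂, hx2, rfl⟩
        linarith [key u₁ hx1 u₂ hx2]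
      linarith
    linarith

lemma posPart_le_abs' (a : F) : a⁺ ≤ |a| := by
  rw [posPart_def]
  exact sup_le (le_abs_self a) (abs_nonneg a)

lemma negPart_le_abs' (a : F) : a⁻ ≤ |a| := by
  rw [negPart_def]
  exact sup_le (neg_le_abs a) (abs_nonneg a)

lemma qfun_partEq (φ : F →L[ℝ] ℝ) (a b : F) :
    qfun φ (a + b)⁺ + (qfun φ a⁻ + qfun φ b⁻) =
      qfun φ (a + b)⁻ + (qfun φ a⁺ + qfun φ b⁺) := by
  have hkey : (a + b)⁺ + (a⁻ + b⁻) = (a + b)⁻ + (a⁺ + b⁺) := by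
    have h1 : (a + b)⁺ = a + b + (a + b)⁻ := eq_add_of_sub_eq (posPart_sub_negPart _)
    have h2 : a⁺ = a + a⁻ := eq_add_of_sub_eq (posPart_sub_negPart _)
    have h3 : b⁺ = b + b⁻ := eq_add_of_sub_eq (posPart_sub_negPart _)
    rw [h1, h2, h3]; abel
  have e1 : qfun φ ((a + b)⁺ + (a⁻ + b⁻)) =
      qfun φ (a + b)⁺ + (qfun φ a⁻ + qfun φ b⁻) := by
    rw [qfun_add φ (posPart_nonneg _) (add_nonneg (negPart_nonneg _) (negPart_nonneg _)),
      qfun_add φ (negPart_nonneg _) (negPart_nonneg _)]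
  have e2 : qfun φ ((a + b)⁻ + (a⁺ + b⁺)) =
      qfun φ (a + b)⁻ + (qfun φ a⁺ + qfun φ b⁺) := by
    rw [qfun_add φ (negPart_nonneg _) (add_nonneg (posPart_nonneg _) (posPart_nonneg _)),
      qfun_add φ (posPart_nonneg _) (posPart_nonneg _)]
  rw [← e1, ← e2, hkey]

/-- The modulus of a continuous functional on a Banach lattice, as an additive map. -/
noncomputable def modulusHom (φ : F →L[ℝ] ℝ) : F →+ ℝ :=
  AddMonoidHom.mk' (fun w => qfun φ w⁺ - qfun φ w⁻) (by
    intro a b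
    have := qfun_partEq φ a b
    try dsimp only
    linarith)

lemma modulusHom_bound (φ : F →L[ℝ] ℝ) (w : F) : ‖modulusHom φ w‖ ≤ ‖φ‖ * ‖w‖ := by
  have hb : ∀ v : F, 0 ≤ v → v ≤ |w| → qfun φ v ≤ ‖φ‖ * ‖w‖ := by
    intro v hv hvw
    refine (qfun_le φ hv).trans ?_
    have : ‖v‖ ≤ ‖w‖ := by
      have : |v| ≤ |w| := by rwa [abs_of_nonneg hv]
      simpa [norm_abs_eq_norm] using HasSolidNorm.solid (this.trans_eq (abs_abs w).symm)
    exact mul_le_mul_of_nonneg_left this (norm_nonneg φ)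
  have h1 : qfun φ w⁺ ≤ ‖φ‖ * ‖w‖ := hb _ (posPart_nonneg _) (posPart_le_abs' _)
  have h2 : qfun φ w⁻ ≤ ‖φ‖ * ‖w‖ := hb _ (negPart_nonneg _) (negPart_le_abs' _)
  have h3 : 0 ≤ qfun φ w⁺ := qfun_nonneg φ (posPart_nonneg _)
  have h4 : 0 ≤ qfun φ w⁻ := qfun_nonneg φ (negPart_nonneg _)
  have : modulusHom φ w = qfun φ w⁺ - qfun φ w⁻ := rfl
  rw [this, Real.norm_eq_abs, abs_sub_le_iff]
  constructor <;> linarith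

/-- The modulus of a continuous functional on a Banach lattice. -/
noncomputable def modulus (φ : F →L[ℝ] ℝ) : F →L[ℝ] ℝ :=
  (modulusHom φ).toRealLinearMap
    ((AddMonoidHomClass.lipschitz_of_bound (modulusHom φ) ‖φ‖
      (modulusHom_bound φ)).continuous)

lemma modulus_apply_nonneg (φ : F →L[ℝ] ℝ) {z : F} (hz : 0 ≤ z) :
    modulus φ z = qfun φ z := by
  have : modulus φ z = qfun φ z⁺ - qfun φ z⁻ := rfl
  rw [this, posPart_eq_self.mpr hz, negPart_eq_zero.mpr hz, qfun_zero, sub_zero]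

lemma modulus_norm_le (φ : F →L[ℝ] ℝ) : ‖modulus φ‖ ≤ ‖φ‖ :=
  ContinuousLinearMap.opNorm_le_bound _ (norm_nonneg φ) (modulusHom_bound φ)

lemma abs_apply_le_modulus (φ : F →L[ℝ] ℝ) {y z : F} (hz : 0 ≤ z) (h : |y| ≤ z) :
    |φ y| ≤ modulus φ z := by
  rw [modulus_apply_nonneg φ hz]
  exact abs_le_qfun φ h

end Modulus

section WnormLemmas

variable {G : Type*} [NormedAddCommGroup G] [NormedSpace ℝ G]

lemma wnorm_zero_mem {p : ℝ} (hp : 0 < p) {n : ℕ} (x : Fin n → G) :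
    (0 : ℝ) ∈ {s : ℝ | ∃ φ : G →L[ℝ] ℝ, ‖φ‖ ≤ 1 ∧ s = (∑ i, |φ (x i)| ^ p) ^ (1 / p)} := by
  refine ⟨0, by simp, ?_⟩
  have : ∀ i : Fin n, |(0 : G →L[ℝ] ℝ) (x i)| ^ p = 0 := by
    intro i
    simp [Real.zero_rpow hp.ne']
  rw [Finset.sum_congr rfl (fun i _ => this i), Finset.sum_const, smul_zero,
    Real.zero_rpow (by positivity : (1 : ℝ) / p ≠ 0)]

lemma wnorm_bddAbove (p : ℝ) {n : ℕ} (x : Fin n → G) (hp : 0 ≤ p) :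
    BddAbove {s : ℝ | ∃ φ : G →L[ℝ] ℝ, ‖φ‖ ≤ 1 ∧ s = (∑ i, |φ (x i)| ^ p) ^ (1 / p)} := by
  refine ⟨(∑ i, ‖x i‖ ^ p) ^ (1 / p), ?_⟩
  rintro s ⟨φ, hφ, rfl⟩
  apply Real.rpow_le_rpow (by positivity) ?_ (by positivity)
  apply Finset.sum_le_sum
  intro i _
  apply Real.rpow_le_rpow (abs_nonneg _) ?_ hp
  calc |φ (x i)| = ‖φ (x i)‖ := (Real.norm_eq_abs _).symm
    _ ≤ ‖φ‖ * ‖x i‖ := φ.le_opNorm _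
    _ ≤ 1 * ‖x i‖ := mul_le_mul_of_nonneg_right hφ (norm_nonneg _)
    _ = ‖x i‖ := one_mul _

lemma wnorm_nonneg' {p : ℝ} (hp : 0 < p) {n : ℕ} (x : Fin n → G) : 0 ≤ wnorm p x :=
  le_csSup (wnorm_bddAbove p x hp.le) (wnorm_zero_mem hp x)

lemma le_wnorm {p : ℝ} (hp : 0 < p) {n : ℕ} (x : Fin n → G) (φ : G →L[ℝ] ℝ) (hφ : ‖φ‖ ≤ 1) :
    (∑ i, |φ (x i)| ^ p) ^ (1 / p) ≤ wnorm p x :=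
  le_csSup (wnorm_bddAbove p x hp.le) ⟨φ, hφ, rfl⟩

end WnormLemmas

lemma wnorm_mono {F : Type*} [NormedAddCommGroup F] [Lattice F] [IsOrderedAddMonoid F]
    [HasSolidNorm F] [NormedSpace ℝ F]
    {p : ℝ} (hp : 0 < p) {n : ℕ} {y z : Fin n → F}
    (hz : ∀ i, 0 ≤ z i) (h : ∀ i, |y i| ≤ z i) : wnorm p y ≤ wnorm p z := by
  apply csSup_le ⟨0, wnorm_zero_mem hp y⟩
  rintro s ⟨φ, hφ, rfl⟩
  have hψ : ‖modulus φ‖ ≤ 1 := (modulus_norm_le φ).trans hφ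
  refine le_trans ?_ (le_wnorm hp z (modulus φ) hψ)
  apply Real.rpow_le_rpow (by positivity) ?_ (by positivity)
  apply Finset.sum_le_sum
  intro i _
  apply Real.rpow_le_rpow (abs_nonneg _) ?_ hp.le
  have h1 : |φ (y i)| ≤ modulus φ (z i) := abs_apply_le_modulus φ (hz i) (h i)
  exact h1.trans (le_abs_self _)

/-- Minkowski's inequality for a finite family of nonnegative functions. -/
lemma Lp_finsum_le {ι : Type*} (s : Finset ι) {n : ℕ} {p : ℝ} (hp : 1 ≤ p)
    (f : ι → Fin n → ℝ) (hf : ∀ e i, 0 ≤ f e i) :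
    (∑ i, (∑ e ∈ s, f e i) ^ p) ^ (1 / p) ≤ ∑ e ∈ s, (∑ i, f e i ^ p) ^ (1 / p) := by
  classical
  induction s using Finset.cons_induction with
  | empty =>
      simp [Real.zero_rpow (by positivity : p ≠ 0),
        Real.zero_rpow (by positivity : (1 : ℝ) / p ≠ 0),
        Real.zero_rpow (by positivity : p⁻¹ ≠ 0)]
  | cons a s ha ih =>
      simp only [Finset.sum_cons]
      calc (∑ i, (f a i + ∑ e ∈ s, f e i) ^ p) ^ (1 / p)
          ≤ (∑ i, |f a i| ^ p) ^ (1 / p) + (∑ i, |∑ e ∈ s, f e i| ^ p) ^ (1 / p) := by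
            have := Real.Lp_add_le (Finset.univ : Finset (Fin n))
              (fun i => f a i) (fun i => ∑ e ∈ s, f e i) hp
            refine le_trans (le_of_eq ?_) this
            congr 1
            apply Finset.sum_congr rfl
            intro i _
            congr 1
            rw [abs_of_nonneg (add_nonneg (hf a i) (Finset.sum_nonneg fun e _ => hf e i))]
        _ ≤ (∑ i, f a i ^ p) ^ (1 / p) + ∑ e ∈ s, (∑ i, f e i ^ p) ^ (1 / p) := by
            apply add_le_add
            · apply le_of_eq
              congr 1
              exact Finset.sum_congr rfl fun i _ => by rw [abs_of_nonneg (hf a i)]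
            · refine le_trans (le_of_eq ?_) ih
              congr 1
              exact Finset.sum_congr rfl fun i _ =>
                by rw [abs_of_nonneg (Finset.sum_nonneg fun e _ => hf e i)]

/-- Equivalent formulation for positive `(p₁,…,p_m)`-dominated operators: the summing
inequality for positive families (with weak norms) with constant `C` implies the
inequality for arbitrary families (with `|w|`-norms) with constant `2^m C`, and
conversely with the same constant. -/
theorem posPSDominated_equiv_absolute_formulation
    {m : ℕ} {E : Fin m → Type*}
    [∀ j, NormedAddCommGroup (E j)] [∀ j, Lattice (E j)] [∀ j, IsOrderedAddMonoid (E j)]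
    [∀ j, HasSolidNorm (E j)] [∀ j, NormedSpace ℝ (E j)]
    {Y : Type*} [NormedAddCommGroup Y] [NormedSpace ℝ Y]
    (p : ℝ) (pj : Fin m → ℝ) (hpj : ∀ j, 1 ≤ pj j) (hp : 1 ≤ p)
    (hhol : 1 / p = ∑ j, 1 / pj j)
    (T : ContinuousMultilinearMap ℝ E Y) :
    (∀ C : ℝ, 0 < C →
      (∀ (n : ℕ) (x : Fin n → ∀ j, E j), (∀ i j, 0 ≤ x i j) →
        (∑ i, ‖T (x i)‖ ^ p) ^ (1 / p) ≤ C * ∏ j, wnorm (pj j) (fun i => x i j)) →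
      (∀ (n : ℕ) (x : Fin n → ∀ j, E j),
        (∑ i, ‖T (x i)‖ ^ p) ^ (1 / p) ≤
          (2 ^ m * C) * ∏ j, wnorm (pj j) (fun i => |x i j|))) ∧
    (∀ C' : ℝ, 0 < C' →
      (∀ (n : ℕ) (x : Fin n → ∀ j, E j),
        (∑ i, ‖T (x i)‖ ^ p) ^ (1 / p) ≤ C' * ∏ j, wnorm (pj j) (fun i => |x i j|)) →
      (∀ (n : ℕ) (x : Fin n → ∀ j, E j), (∀ i j, 0 ≤ x i j) →
        (∑ i, ‖T (x i)‖ ^ p) ^ (1 / p) ≤ C' * ∏ j, wnorm (pj j) (fun i => x i j))) := by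
  classical
  have hp0 : 0 < p := lt_of_lt_of_le one_pos hp
  constructor
  · -- positive domination implies absolute domination with constant `2^m C`
    intro C hC hyp n x
    set X : (Fin m → Bool) → Fin n → ∀ j, E j :=
      fun r i j => if r j then (x i j)⁺ else (x i j)⁻ with hX
    -- pointwise expansion of `T (x i)` into `2^m` terms
    have hT : ∀ i, ‖T (x i)‖ ≤ ∑ r : Fin m → Bool, ‖T (X r i)‖ := by
      intro i
      have hsum : (fun j => ∑ b : Bool, (if b then (x i j)⁺ else -(x i j)⁻)) = x i := by
        funext j
        rw [Fintype.sum_bool]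
        show (x i j)⁺ + -(x i j)⁻ = x i j
        rw [← sub_eq_add_neg]
        exact posPart_sub_negPart (x i j)
      have hexp := T.toMultilinearMap.map_sum
        (g := fun (j : Fin m) (b : Bool) => if b then (x i j)⁺ else -(x i j)⁻)
      rw [hsum] at hexp
      have hTx : T (x i) = ∑ r : Fin m → Bool,
          T (fun j => if r j then (x i j)⁺ else -(x i j)⁻) := hexp
      calc ‖T (x i)‖
          = ‖∑ r : Fin m → Bool, T (fun j => if r j then (x i j)⁺ else -(x i j)⁻)‖ := by
            rw [hTx]
        _ ≤ ∑ r : Fin m → Bool, ‖T (fun j => if r j then (x i j)⁺ else -(x i j)⁻)‖ :=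
            norm_sum_le _ _
        _ = ∑ r : Fin m → Bool, ‖T (X r i)‖ := by
            apply Finset.sum_congr rfl
            intro r _
            have harg : (fun j => if r j then (x i j)⁺ else -(x i j)⁻) =
                fun j => (if r j then (1 : ℝ) else -1) • X r i j := by
              funext j
              by_cases h : r j <;> simp [hX, h]
            rw [harg, T.map_smul_univ, norm_smul]
            have habs : ∀ j : Fin m, |if r j then (1 : ℝ) else -1| = 1 := by
              intro j
              by_cases h : r j <;> simp [h]
            have hone : ‖∏ j, (if r j then (1 : ℝ) else -1)‖ = 1 := by
              rw [Real.norm_eq_abs, Finset.abs_prod,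
                Finset.prod_congr rfl (fun j _ => habs j), Finset.prod_const_one]
            rw [hone, one_mul]
    -- the `ℓ_p` estimate
    have hmain : (∑ i, ‖T (x i)‖ ^ p) ^ (1 / p) ≤
        ∑ r : Fin m → Bool, (∑ i, ‖T (X r i)‖ ^ p) ^ (1 / p) := by
      calc (∑ i, ‖T (x i)‖ ^ p) ^ (1 / p)
          ≤ (∑ i, (∑ r : Fin m → Bool, ‖T (X r i)‖) ^ p) ^ (1 / p) := by
            apply Real.rpow_le_rpow (by positivity) ?_ (by positivity)
            apply Finset.sum_le_sum
            intro i _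
            exact Real.rpow_le_rpow (norm_nonneg _) (hT i) hp0.le
        _ ≤ _ := Lp_finsum_le Finset.univ hp _ (fun r i => norm_nonneg _)
    -- estimate each of the `2^m` terms
    have hterm : ∀ r : Fin m → Bool,
        (∑ i, ‖T (X r i)‖ ^ p) ^ (1 / p) ≤ C * ∏ j, wnorm (pj j) (fun i => |x i j|) := by
      intro r
      have hpos : ∀ i j, 0 ≤ X r i j := by
        intro i j
        by_cases h : r j <;> simp only [hX, h, if_true, if_false]
        · exact posPart_nonneg _
        · exact negPart_nonneg _
      refine (hyp n (X r) hpos).trans ?_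
      apply mul_le_mul_of_nonneg_left ?_ hC.le
      apply Finset.prod_le_prod
      · intro j _
        exact wnorm_nonneg' (lt_of_lt_of_le one_pos (hpj j)) _
      · intro j _
        apply wnorm_mono (lt_of_lt_of_le one_pos (hpj j)) (fun i => abs_nonneg _)
        intro i
        rw [abs_of_nonneg (by
          by_cases h : r j <;> simp only [hX, h, if_true, if_false]
          · exact posPart_nonneg _
          · exact negPart_nonneg _)]
        by_cases h : r j <;> simp only [hX, h, if_true, if_false]
        · exact posPart_le_abs' _
        · exact negPart_le_abs' _
    have hcard : (Finset.univ : Finset (Fin m → Bool)).card = 2 ^ m := by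
      simp [Fintype.card_fun]
    calc (∑ i, ‖T (x i)‖ ^ p) ^ (1 / p)
        ≤ ∑ r : Fin m → Bool, (∑ i, ‖T (X r i)‖ ^ p) ^ (1 / p) := hmain
      _ ≤ ∑ _r : Fin m → Bool, C * ∏ j, wnorm (pj j) (fun i => |x i j|) :=
          Finset.sum_le_sum fun r _ => hterm r
      _ = (2 ^ m * C) * ∏ j, wnorm (pj j) (fun i => |x i j|) := by
          rw [Finset.sum_const, hcard, nsmul_eq_mul]
          push_cast
          ring
  · -- absolute domination implies positive domination, with the same constant
    intro C' _ hyp n x hx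
    have heq : (∏ j, wnorm (pj j) fun i => |x i j|) =
        ∏ j, wnorm (pj j) fun i => x i j := by
      apply Finset.prod_congr rfl
      intro j _
      congr 1
      funext i
      exact abs_of_nonneg (hx i j)
    have := hyp n x
    rwa [heq] at this
end
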